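/- Let V be a finite vertex set, let E and Ê be finite sets of edges over V, and set FP = Ê \ E and FN = E \ Ê. Let M* ⊆ Ê be any matching with |M*| = ν(Ê). Then |M* ∩ E| ≥ ν(E) − ν(FP) − ν(FN) ≥ ν(E) − 2·ν(FP ∪ FN). (This is the Trust guarantee for online matching under the edge-arrival model: Trust accepts exactly the edges of M* that arrive, so it is strictly (1 − 2γ)-competitive, where γ = ν(FP ∪ FN)/ν(E).) -/

import Mathlib

open scoped Classical

/-- A finite set of edges (unordered pairs of distinct vertices) is a matching if its
edges are pairwise vertex-disjoint. -/
def IsMatchingSet {V : Type*} (M : Finset (Sym2 V)) : Prop :=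
  ∀ e ∈ M, ∀ f ∈ M, e ≠ f → ∀ v : V, v ∈ e → v ∉ f

/-- `nu S` is the maximum cardinality of a matching contained in the edge set `S`. -/
noncomputable def nu {V : Type*} (S : Finset (Sym2 V)) : ℕ :=
  (S.powerset.filter fun M => IsMatchingSet M).sup Finset.card

lemma IsMatchingSet.subset {V : Type*} {M N : Finset (Sym2 V)} (h : N ⊆ M)
    (hM : IsMatchingSet M) : IsMatchingSet N :=
  fun e he f hf hne v hv => hM e (h he) f (h hf) hne v hv

lemma card_le_nu {V : Type*} {M S : Finset (Sym2 V)} (hsub : M ⊆ S)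
    (hM : IsMatchingSet M) : M.card ≤ nu S := by
  apply Finset.le_sup
  simp [Finset.mem_filter, Finset.mem_powerset, hsub, hM]

lemma nu_mono {V : Type*} {S T : Finset (Sym2 V)} (h : S ⊆ T) : nu S ≤ nu T := by
  apply Finset.sup_le
  intro M hM
  simp only [Finset.mem_filter, Finset.mem_powerset] at hM
  exact card_le_nu (hM.1.trans h) hM.2

lemma exists_max_matching {V : Type*} (S : Finset (Sym2 V)) :
    ∃ M ⊆ S, IsMatchingSet M ∧ M.card = nu S := by
  obtain ⟨M, hM, hcard⟩ := Finset.exists_mem_eq_sup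
    (S.powerset.filter fun M => IsMatchingSet M)
    ⟨∅, Finset.mem_filter.mpr ⟨Finset.empty_mem_powerset S, fun e he => by simp at he⟩⟩ Finset.card
  simp only [Finset.mem_filter, Finset.mem_powerset] at hM
  exact ⟨M, hM.1, hM.2, hcard.symm⟩

/-- Trust guarantee for online matching under edge arrival.
Let `V` be a finite vertex set, `E` and `Ehat` finite sets of edges, `FP = Ehat \ E`,
`FN = E \ Ehat`, and let `Mstar ⊆ Ehat` be a matching with `|Mstar| = ν(Ehat)`. Then
`|Mstar ∩ E| ≥ ν(E) − ν(FP) − ν(FN) ≥ ν(E) − 2·ν(FP ∪ FN)`. -/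
theorem trust_matching_competitive
    {V : Type*} [Fintype V] [DecidableEq V]
    (E Ehat : Finset (Sym2 V))
    (hE : ∀ e ∈ E, ¬ e.IsDiag) (hEhat : ∀ e ∈ Ehat, ¬ e.IsDiag)
    (Mstar : Finset (Sym2 V)) (hsub : Mstar ⊆ Ehat)
    (hmatch : IsMatchingSet Mstar) (hopt : Mstar.card = nu Ehat) :
    (nu E : ℤ) - nu (Ehat \ E) - nu (E \ Ehat) ≤ ((Mstar ∩ E).card : ℤ) ∧
    (nu E : ℤ) - 2 * nu ((Ehat \ E) ∪ (E \ Ehat)) ≤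
      (nu E : ℤ) - nu (Ehat \ E) - nu (E \ Ehat) := by
  obtain ⟨ME, hMEsub, hMEmatch, hMEcard⟩ := exists_max_matching E
  have h1 : (ME \ Ehat).card ≤ nu (E \ Ehat) :=
    card_le_nu (fun e he => by
      simp only [Finset.mem_sdiff] at he ⊢; exact ⟨hMEsub he.1, he.2⟩)
      (hMEmatch.subset (Finset.sdiff_subset))
  have h2 : (ME ∩ Ehat).card ≤ Mstar.card := by
    rw [hopt]
    exact card_le_nu (Finset.inter_subset_right) (hMEmatch.subset (Finset.inter_subset_left))
  have h3 : (Mstar \ E).card ≤ nu (Ehat \ E) :=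
    card_le_nu (fun e he => by
      simp only [Finset.mem_sdiff] at he ⊢; exact ⟨hsub he.1, he.2⟩)
      (hmatch.subset (Finset.sdiff_subset))
  have h4 : (ME ∩ Ehat).card + (ME \ Ehat).card = ME.card :=
    Finset.card_inter_add_card_sdiff ME Ehat
  have h5 : (Mstar ∩ E).card + (Mstar \ E).card = Mstar.card :=
    Finset.card_inter_add_card_sdiff Mstar E
  have h6 : nu (Ehat \ E) ≤ nu ((Ehat \ E) ∪ (E \ Ehat)) :=
    nu_mono Finset.subset_union_left
  have h7 : nu (E \ Ehat) ≤ nu ((Ehat \ E) ∪ (E \ Ehat)) :=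
    nu_mono Finset.subset_union_right
  constructor <;> push_cast <;> omega
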